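/- Let z₁, z₂, Q, J₁₀, J₂₀, c₁₀^{a,m} ∈ ℝ with z₁ ≠ 0, z₂ ≠ 0, z₁ ≠ z₂, I₀ := z₁J₁₀ + z₂J₂₀, T₀ := J₁₀ + J₂₀ ≠ 0. Let c₁₀(y) := e^{z₁z₂T₀y}·c₁₀^{a,m} + (J₁₀Q/(z₁T₀))·(e^{z₁z₂T₀y} − 1) and σ(y) := (z₁ − z₂)z₁c₁₀(y) − z₂Q, and suppose σ(s) > 0 for all s ∈ [0, y]. Then ∫₀^y z₁I₀c₁₀(s)²/σ(s) ds = I₀·(c₁₀(y) − c₁₀^{a,m})/(z₁z₂(z₁ − z₂)T₀) + (z₂Q/(z₁²(z₁ − z₂)²))·(ln σ(y) − ln σ(0)) − J₁₀²·y·Q/(z₁T₀). -/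

import Mathlib

/-- Integral identity for `S₅` in (3.42). -/
theorem integral_identity_S5_middle
    (z₁ z₂ Q J₁₀ J₂₀ c₁₀am y : ℝ)
    (hz₁ : z₁ ≠ 0) (hz₂ : z₂ ≠ 0) (hz₁₂ : z₁ ≠ z₂)
    (I₀ T₀ : ℝ) (hI₀ : I₀ = z₁ * J₁₀ + z₂ * J₂₀) (hT₀ : T₀ = J₁₀ + J₂₀)
    (hT₀ne : T₀ ≠ 0)
    (c₁₀ σ : ℝ → ℝ)
    (hc₁₀ : ∀ s, c₁₀ s = Real.exp (z₁ * z₂ * T₀ * s) * c₁₀am +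
      (J₁₀ * Q / (z₁ * T₀)) * (Real.exp (z₁ * z₂ * T₀ * s) - 1))
    (hσ : ∀ s, σ s = (z₁ - z₂) * z₁ * c₁₀ s - z₂ * Q)
    (hy : 0 ≤ y) (hσpos : ∀ s ∈ Set.Icc 0 y, 0 < σ s) :
    (∫ s in (0 : ℝ)..y, z₁ * I₀ * (c₁₀ s) ^ 2 / σ s) =
      I₀ * (c₁₀ y - c₁₀am) / (z₁ * z₂ * (z₁ - z₂) * T₀) +
      (z₂ * Q / (z₁ ^ 2 * (z₁ - z₂) ^ 2)) * (Real.log (σ y) - Real.log (σ 0)) -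
      J₁₀ ^ 2 * y * Q / (z₁ * T₀) := by
  have hz₁₂' : z₁ - z₂ ≠ 0 := sub_ne_zero.mpr hz₁₂
  have hT : J₁₀ + J₂₀ ≠ 0 := hT₀ ▸ hT₀ne
  -- derivative of c₁₀
  have hc' : ∀ s : ℝ, HasDerivAt c₁₀ (z₁ * z₂ * T₀ * c₁₀ s + z₂ * J₁₀ * Q) s := by
    intro s
    have hexp : HasDerivAt (fun t : ℝ => Real.exp (z₁ * z₂ * T₀ * t))
        (Real.exp (z₁ * z₂ * T₀ * s) * (z₁ * z₂ * T₀)) s := by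
      have h1 : HasDerivAt (fun t : ℝ => z₁ * z₂ * T₀ * t) (z₁ * z₂ * T₀) s := by
        simpa using (hasDerivAt_id s).const_mul (z₁ * z₂ * T₀)
      exact h1.exp
    have h : HasDerivAt (fun t : ℝ => Real.exp (z₁ * z₂ * T₀ * t) * c₁₀am +
        (J₁₀ * Q / (z₁ * T₀)) * (Real.exp (z₁ * z₂ * T₀ * t) - 1))
        (Real.exp (z₁ * z₂ * T₀ * s) * (z₁ * z₂ * T₀) * c₁₀am +
          (J₁₀ * Q / (z₁ * T₀)) * (Real.exp (z₁ * z₂ * T₀ * s) * (z₁ * z₂ * T₀))) s :=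
      (hexp.mul_const c₁₀am).add (((hexp.sub_const 1)).const_mul _)
    have heq : (fun t : ℝ => Real.exp (z₁ * z₂ * T₀ * t) * c₁₀am +
        (J₁₀ * Q / (z₁ * T₀)) * (Real.exp (z₁ * z₂ * T₀ * t) - 1)) = c₁₀ := by
      funext t; rw [hc₁₀ t]
    rw [heq] at h
    convert h using 1
    rw [hc₁₀ s]
    field_simp
    ring
  have hσ' : ∀ s : ℝ, HasDerivAt σ
      ((z₁ - z₂) * z₁ * (z₁ * z₂ * T₀ * c₁₀ s + z₂ * J₁₀ * Q)) s := by
    intro s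
    have h : HasDerivAt (fun t => (z₁ - z₂) * z₁ * c₁₀ t - z₂ * Q)
        ((z₁ - z₂) * z₁ * (z₁ * z₂ * T₀ * c₁₀ s + z₂ * J₁₀ * Q)) s :=
      ((hc' s).const_mul _).sub_const _
    have heq : (fun t => (z₁ - z₂) * z₁ * c₁₀ t - z₂ * Q) = σ := by
      funext t; rw [hσ t]
    rwa [heq] at h
  -- continuity
  have hc₁₀cont : Continuous c₁₀ :=
    (Differentiable.continuous fun s => (hc' s).differentiableAt)
  have hσcont : Continuous σ :=
    (Differentiable.continuous fun s => (hσ' s).differentiableAt)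
  -- antiderivative
  set F : ℝ → ℝ := fun s =>
    I₀ * (c₁₀ s - c₁₀am) / (z₁ * z₂ * (z₁ - z₂) * T₀) +
      (z₂ * Q / (z₁ ^ 2 * (z₁ - z₂) ^ 2)) * Real.log (σ s) -
      J₁₀ ^ 2 * s * Q / (z₁ * T₀) with hF
  have hFderiv : ∀ s ∈ Set.uIcc (0 : ℝ) y,
      HasDerivAt F (z₁ * I₀ * (c₁₀ s) ^ 2 / σ s) s := by
    intro s hs
    rw [Set.uIcc_of_le hy] at hs
    have hσs : σ s ≠ 0 := (hσpos s hs).ne'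
    have h1 : HasDerivAt (fun t => I₀ * (c₁₀ t - c₁₀am) / (z₁ * z₂ * (z₁ - z₂) * T₀))
        (I₀ * (z₁ * z₂ * T₀ * c₁₀ s + z₂ * J₁₀ * Q) / (z₁ * z₂ * (z₁ - z₂) * T₀)) s := by
      simpa [mul_div_assoc] using
        ((((hc' s).sub_const c₁₀am).const_mul I₀).div_const (z₁ * z₂ * (z₁ - z₂) * T₀))
    have h2 : HasDerivAt (fun t => (z₂ * Q / (z₁ ^ 2 * (z₁ - z₂) ^ 2)) * Real.log (σ t))
        ((z₂ * Q / (z₁ ^ 2 * (z₁ - z₂) ^ 2)) *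
          ((z₁ - z₂) * z₁ * (z₁ * z₂ * T₀ * c₁₀ s + z₂ * J₁₀ * Q) / σ s)) s :=
      ((hσ' s).log hσs).const_mul _
    have h3 : HasDerivAt (fun t : ℝ => J₁₀ ^ 2 * t * Q / (z₁ * T₀))
        (J₁₀ ^ 2 * Q / (z₁ * T₀)) s := by
      have : HasDerivAt (fun t : ℝ => (J₁₀ ^ 2 * Q / (z₁ * T₀)) * t)
          (J₁₀ ^ 2 * Q / (z₁ * T₀)) s := by
        simpa using (hasDerivAt_id s).const_mul (J₁₀ ^ 2 * Q / (z₁ * T₀))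
      convert this using 2 with t
      ring
    have h := (h1.add h2).sub h3
    have hσs' : (z₁ - z₂) * z₁ * c₁₀ s - z₂ * Q ≠ 0 := by rw [hσ s] at hσs; exact hσs
    refine h.congr_deriv ?_
    symm
    rw [hI₀, hT₀]
    field_simp [hσs, hz₁, hz₂, hz₁₂', hT]
    rw [hσ s]
    ring
  have hint : IntervalIntegrable (fun s => z₁ * I₀ * (c₁₀ s) ^ 2 / σ s)
      MeasureTheory.volume 0 y := by
    apply ContinuousOn.intervalIntegrable
    rw [Set.uIcc_of_le hy]
    exact ContinuousOn.div ((continuous_const.mul (hc₁₀cont.pow 2)).continuousOn) hσcont.continuousOn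
      (fun s hs => (hσpos s hs).ne')
  have h0 : c₁₀ 0 = c₁₀am := by rw [hc₁₀ 0]; simp
  have := intervalIntegral.integral_eq_sub_of_hasDerivAt hFderiv hint
  rw [this, hF]
  simp only [h0]
  ring
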